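/- Let A be a real n×n matrix and b ∈ ℝⁿ such that aᵢⱼ ≥ 0 and aᵢᵢ > 0 for all i,j, and bᵢ > 0 for all i (a positive system). If moreover bᵢ > Σ_{j≠i} (aᵢⱼ/aⱼⱼ) bⱼ for every i = 1,…,n, then A is invertible and the unique solution x of Ax = b satisfies 0 < xᵢ ≤ bᵢ/aᵢᵢ for every i. -/

import Mathlib

open Matrix Finset

private lemma psps_sum_upper {n : ℕ} (A : Matrix (Fin n) (Fin n) ℝ) (b x : Fin n → ℝ)
    (hA_nonneg : ∀ i j, 0 ≤ A i j) (hA_diag : ∀ i, 0 < A i i)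
    (t : ℝ) (ht : ∀ j, A j j * x j ≤ t * b j) (i : Fin n) :
    ∑ j ∈ univ.erase i, A i j * x j ≤ t * ∑ j ∈ univ.erase i, (A i j / A j j) * b j := by
  rw [Finset.mul_sum]
  apply Finset.sum_le_sum
  intro j _
  have hdj := (hA_diag j).ne'
  have h1 : A i j * x j = (A i j / A j j) * (A j j * x j) := by
    field_simp
  rw [h1]
  calc (A i j / A j j) * (A j j * x j) ≤ (A i j / A j j) * (t * b j) :=
        mul_le_mul_of_nonneg_left (ht j) (div_nonneg (hA_nonneg i j) (hA_diag j).le)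
    _ = t * ((A i j / A j j) * b j) := by ring

private lemma psps_sum_lower {n : ℕ} (A : Matrix (Fin n) (Fin n) ℝ) (b x : Fin n → ℝ)
    (hA_nonneg : ∀ i j, 0 ≤ A i j) (hA_diag : ∀ i, 0 < A i i)
    (t : ℝ) (ht : ∀ j, t * b j ≤ A j j * x j) (i : Fin n) :
    t * ∑ j ∈ univ.erase i, (A i j / A j j) * b j ≤ ∑ j ∈ univ.erase i, A i j * x j := by
  rw [Finset.mul_sum]
  apply Finset.sum_le_sum
  intro j _
  have hdj := (hA_diag j).ne'
  have h1 : A i j * x j = (A i j / A j j) * (A j j * x j) := by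
    field_simp
  rw [h1]
  calc t * ((A i j / A j j) * b j) = (A i j / A j j) * (t * b j) := by ring
    _ ≤ (A i j / A j j) * (A j j * x j) :=
        mul_le_mul_of_nonneg_left (ht j) (div_nonneg (hA_nonneg i j) (hA_diag j).le)

theorem positive_system_positive_solution {n : ℕ}
    (A : Matrix (Fin n) (Fin n) ℝ) (b : Fin n → ℝ)
    (hA_nonneg : ∀ i j, 0 ≤ A i j) (hA_diag : ∀ i, 0 < A i i)
    (hb : ∀ i, 0 < b i)
    (hcond : ∀ i, ∑ j ∈ Finset.univ.erase i, (A i j / A j j) * b j < b i) :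
    IsUnit A ∧ ∀ x : Fin n → ℝ, A.mulVec x = b →
      ∀ i, 0 < x i ∧ x i ≤ b i / A i i := by
  have hS_nonneg : ∀ i, (0:ℝ) ≤ ∑ j ∈ univ.erase i, (A i j / A j j) * b j := by
    intro i
    refine Finset.sum_nonneg fun j _ => ?_
    exact mul_nonneg (div_nonneg (hA_nonneg i j) (hA_diag j).le) (hb j).le
  constructor
  · rw [← Matrix.mulVec_injective_iff_isUnit]
    have hker : ∀ w : Fin n → ℝ, A.mulVec w = 0 → w = 0 := by
      intro w hw
      funext j
      simp only [Pi.zero_apply]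
      by_contra hj
      obtain ⟨imax, -, hmax⟩ := Finset.exists_max_image univ
        (fun k => |w k| * A k k / b k) ⟨j, mem_univ j⟩
      set t := |w imax| * A imax imax / b imax with ht_def
      have htpos : 0 < t := by
        have hj' : 0 < |w j| * A j j / b j :=
          div_pos (mul_pos (abs_pos.mpr hj) (hA_diag j)) (hb j)
        exact lt_of_lt_of_le hj' (hmax j (mem_univ j))
      have hub : ∀ k, A k k * |w k| ≤ t * b k := fun k => by
        have := (div_le_iff₀ (hb k)).mp (hmax k (mem_univ k))
        linarith [this]
      have heqm : A imax imax * w imax = - ∑ k ∈ univ.erase imax, A imax k * w k := by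
        have := congrFun hw imax
        simp only [Matrix.mulVec, dotProduct, Pi.zero_apply] at this
        rw [← Finset.add_sum_erase univ _ (mem_univ imax)] at this
        linarith
      have habs : A imax imax * |w imax| ≤ ∑ k ∈ univ.erase imax, A imax k * |w k| := by
        calc A imax imax * |w imax| = |A imax imax * w imax| := by
              rw [abs_mul, abs_of_pos (hA_diag imax)]
          _ = |∑ k ∈ univ.erase imax, A imax k * w k| := by rw [heqm, abs_neg]
          _ ≤ ∑ k ∈ univ.erase imax, |A imax k * w k| := Finset.abs_sum_le_sum_abs _ _
          _ = ∑ k ∈ univ.erase imax, A imax k * |w k| := by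
              refine Finset.sum_congr rfl fun k _ => ?_
              rw [abs_mul, abs_of_nonneg (hA_nonneg imax k)]
      have hsum := psps_sum_upper A b (fun k => |w k|) hA_nonneg hA_diag t hub imax
      have hteq : t * b imax = A imax imax * |w imax| := by
        rw [ht_def, div_mul_cancel₀ _ (hb imax).ne', mul_comm]
      have hS := hcond imax
      nlinarith [habs, hsum, hteq, htpos]
    intro y z hyz
    have h0 : A.mulVec (y - z) = 0 := by rw [Matrix.mulVec_sub, hyz, sub_self]
    exact sub_eq_zero.mp (hker _ h0)
  · intro x hx i
    have heq : ∀ k, A k k * x k = b k - ∑ j ∈ univ.erase k, A k j * x j := by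
      intro k
      have := congrFun hx k
      simp only [Matrix.mulVec, dotProduct] at this
      rw [← Finset.add_sum_erase univ _ (mem_univ k)] at this
      linarith
    obtain ⟨imax, -, hmax⟩ := Finset.exists_max_image univ
      (fun j => A j j * x j / b j) ⟨i, mem_univ i⟩
    obtain ⟨imin, -, hmin⟩ := Finset.exists_min_image univ
      (fun j => A j j * x j / b j) ⟨i, mem_univ i⟩
    set u := A imax imax * x imax / b imax with hu_def
    set l := A imin imin * x imin / b imin with hl_def
    have hub : ∀ j, A j j * x j ≤ u * b j := fun j =>
      (div_le_iff₀ (hb j)).mp (by simpa using hmax j (mem_univ j))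
    have hlb : ∀ j, l * b j ≤ A j j * x j := fun j => by
      have := (le_div_iff₀ (hb j)).mp (by simpa using hmin j (mem_univ j))
      linarith [this]
    have hub' : u * b imax = A imax imax * x imax := by
      rw [hu_def, div_mul_cancel₀ _ (hb imax).ne']
    have hlb' : l * b imin = A imin imin * x imin := by
      rw [hl_def, div_mul_cancel₀ _ (hb imin).ne']
    -- key inequalities
    have key1 : u * b imax ≤ b imax - l * ∑ j ∈ univ.erase imax, (A imax j / A j j) * b j := by
      rw [hub', heq imax]
      have := psps_sum_lower A b x hA_nonneg hA_diag l hlb imax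
      linarith
    have key2 : b imin - u * ∑ j ∈ univ.erase imin, (A imin j / A j j) * b j ≤ l * b imin := by
      rw [hlb', heq imin]
      have := psps_sum_upper A b x hA_nonneg hA_diag u hub imin
      linarith
    have hu1 : u ≤ 1 := by
      by_contra h
      push_neg at h
      have hlgt : 1 - u < l := by
        have h1 : u * (∑ j ∈ univ.erase imin, (A imin j / A j j) * b j) < u * b imin :=
          mul_lt_mul_of_pos_left (hcond imin) (by linarith)
        have : (1 - u) * b imin < l * b imin := by nlinarith [hb imin]
        exact lt_of_mul_lt_mul_right (by linarith [this]) (hb imin).le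
      rcases le_or_gt 0 l with hl0 | hl0
      · have : u * b imax ≤ b imax := by
          nlinarith [mul_nonneg hl0 (hS_nonneg imax)]
        nlinarith [hb imax]
      · have h2 : l * b imax < l * (∑ j ∈ univ.erase imax, (A imax j / A j j) * b j) := by
          nlinarith [hcond imax]
        have : u * b imax < (1 - l) * b imax := by nlinarith
        have hult : u < 1 - l := lt_of_mul_lt_mul_right (by linarith) (hb imax).le
        linarith
    have hl0 : 0 < l := by
      rcases le_or_gt 0 u with hu0 | hu0
      · have h1 : u * (∑ j ∈ univ.erase imin, (A imin j / A j j) * b j)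
            ≤ ∑ j ∈ univ.erase imin, (A imin j / A j j) * b j := by
          nlinarith [hS_nonneg imin]
        have h2 : 0 < l * b imin := by nlinarith [hcond imin]
        by_contra hnl
        push_neg at hnl
        nlinarith [mul_nonpos_of_nonpos_of_nonneg hnl (hb imin).le]
      · have hlu : l ≤ u := by
          have h1 := hub imin
          have h2 := hlb imin
          nlinarith [hb imin]
        have : u * (∑ j ∈ univ.erase imin, (A imin j / A j j) * b j) ≤ 0 :=
          mul_nonpos_of_nonpos_of_nonneg hu0.le (hS_nonneg imin)
        nlinarith [hb imin, hlb' , key2]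
    refine ⟨?_, ?_⟩
    · have h1 : 0 < A i i * x i := lt_of_lt_of_le (mul_pos hl0 (hb i)) (hlb i)
      nlinarith [hA_diag i]
    · have h1 : A i i * x i ≤ b i := by
        have := hub i
        nlinarith [hb i]
      rw [le_div_iff₀ (hA_diag i)]
      linarith [h1, mul_comm (x i) (A i i)]
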